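/- For every integer N ≥ 1 and all integers n, n' with 0 ≤ n, n' ≤ N, the symmetric Krawtchouk polynomials evaluated at even arguments satisfy the orthogonality relation Σ_{x=0}^{N} 2^{−(2N−1)} · C(2N, n) · C(2N, 2x) · K_n(2x; 1/2, 2N) · K_{n'}(2x; 1/2, 2N) = δ_{n,n'} if n ≠ N, and = 2·δ_{n,n'} if n = N, where C(a, b) denotes the binomial coefficient. -/

import Mathlib

/-- The Pochhammer symbol `(a)_k = a (a+1) ⋯ (a+k-1)`. -/
noncomputable def poch (a : ℝ) (k : ℕ) : ℝ := ∏ i ∈ Finset.range k, (a + i)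

/-- The Krawtchouk polynomial `K_n(x; p, N)` defined by the terminating
hypergeometric sum `∑_{k=0}^n (−n)_k (−x)_k / ((−N)_k k!) · (1/p)^k`. -/
noncomputable def kraw (n : ℕ) (x : ℝ) (p : ℝ) (N : ℕ) : ℝ :=
  ∑ k ∈ Finset.range (n + 1),
    poch (-(n : ℝ)) k * poch (-x) k / (poch (-(N : ℝ)) k * (Nat.factorial k : ℝ)) * (1 / p) ^ k

open Polynomial

lemma poch_succ (a : ℝ) (k : ℕ) : poch a (k+1) = poch a k * (a + k) :=
  Finset.prod_range_succ _ _

lemma poch_neg_nat (m k : ℕ) : poch (-(m:ℝ)) k = (-1)^k * (Nat.descFactorial m k : ℝ) := by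
  induction k with
  | zero => simp [poch]
  | succ k ih =>
    rw [poch_succ, ih, Nat.descFactorial_succ]
    rcases le_or_gt k m with h | h
    · have : ((m - k : ℕ) : ℝ) = (m:ℝ) - k := by
        push_cast [h]; ring
      push_cast [this]; ring
    · rw [Nat.descFactorial_eq_zero_iff_lt.2 h]
      push_cast; ring

lemma kraw_nat (a x M : ℕ) (ha : a ≤ M) :
    kraw a (x:ℝ) (1/2) M = ∑ k ∈ Finset.range (a+1),
      (-2:ℝ)^k * (a.choose k : ℝ) * (x.descFactorial k : ℝ) / (M.descFactorial k : ℝ) := by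
  unfold kraw
  apply Finset.sum_congr rfl
  intro k hk
  rw [Finset.mem_range] at hk
  have hkM : k ≤ M := le_trans (Nat.lt_succ_iff.mp hk) ha
  have hMd : (M.descFactorial k : ℝ) ≠ 0 := by
    have := Nat.descFactorial_eq_zero_iff_lt (n := M) (k := k)
    intro h
    exact absurd (this.mp (by exact_mod_cast h)) (by omega)
  have hfac : (Nat.factorial k : ℝ) ≠ 0 := by exact_mod_cast (Nat.factorial_pos k).ne'
  rw [poch_neg_nat, poch_neg_nat, poch_neg_nat]
  have hA : (a.descFactorial k : ℝ) = (Nat.factorial k : ℝ) * (a.choose k : ℝ) := by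
    rw [Nat.descFactorial_eq_factorial_mul_choose]; push_cast; ring
  rw [hA]
  have h2 : ((-1:ℝ))^k * (-1:ℝ)^k = 1 := by
    rw [← mul_pow]; norm_num
  set s : ℝ := (-1)^k with hs
  have hs2 : s * s = 1 := h2
  have hs0 : s ≠ 0 := by rw [hs]; exact pow_ne_zero _ (by norm_num)
  have h4 : (-2:ℝ)^k = s * 2^k := by rw [hs, ← neg_one_mul (2:ℝ), mul_pow]
  rw [h4]
  field_simp

open Polynomial

noncomputable def kap (M a x : ℕ) : ℝ :=
  (((1 - X) ^ x * (1 + X) ^ (M - x) : ℝ[X])).coeff a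

lemma kap_expand (M a x : ℕ) (hx : x ≤ M) :
    kap M a x = ∑ k ∈ Finset.range (x+1),
      (-2:ℝ)^k * (x.choose k : ℝ) * (if k ≤ a then (((M-k).choose (a-k) : ℕ) : ℝ) else 0) := by
  unfold kap
  have hC2 : (C (-2) : ℝ[X]) = -2 := by rw [map_neg, map_ofNat]
  have h1 : ((1 - X : ℝ[X])) ^ x = (C (-2) * X + (1 + X)) ^ x := by
    congr 1; rw [hC2]; ring
  rw [h1, add_pow, Finset.sum_mul, Polynomial.finset_sum_coeff]
  apply Finset.sum_congr rfl
  intro k hk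
  rw [Finset.mem_range] at hk
  have hkx : k ≤ x := Nat.lt_succ_iff.mp hk
  have hpow : (1 + X : ℝ[X]) ^ (x - k) * (1 + X) ^ (M - x) = (1 + X) ^ (M - k) := by
    rw [← pow_add]; congr 1; omega
  have key : (C (-2) * X : ℝ[X]) ^ k * (1 + X) ^ (x - k) * (x.choose k : ℝ[X]) * (1 + X) ^ (M - x)
      = C ((-2)^k * (x.choose k : ℝ)) * ((1 + X) ^ (M - k) * X ^ k) := by
    rw [← hpow, mul_pow, ← C_pow]
    rw [← C_eq_natCast, C_mul]
    ring
  rw [key, coeff_C_mul, coeff_mul_X_pow']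
  by_cases hka : k ≤ a
  · simp only [if_pos hka, coeff_one_add_X_pow]
  · simp [hka]

lemma choose_mul_kraw_eq_kap (M a x : ℕ) (ha : a ≤ M) (hx : x ≤ M) :
    (M.choose a : ℝ) * kraw a (x:ℝ) (1/2) M = kap M a x := by
  rw [kraw_nat a x M ha, kap_expand M a x hx, Finset.mul_sum]
  have hsub1 : Finset.range (a+1) ⊆ Finset.range (M+1) := Finset.range_subset_range.2 (by omega)
  have hsub2 : Finset.range (x+1) ⊆ Finset.range (M+1) := Finset.range_subset_range.2 (by omega)
  rw [Finset.sum_subset hsub1 (fun k _ hk' => by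
    rw [Finset.mem_range, not_lt] at hk'
    have : a.choose k = 0 := Nat.choose_eq_zero_of_lt (by omega)
    rw [this]; push_cast; ring)]
  rw [Finset.sum_subset hsub2 (fun k _ hk' => by
    rw [Finset.mem_range, not_lt] at hk'
    have : x.choose k = 0 := Nat.choose_eq_zero_of_lt (by omega)
    rw [this]; push_cast; ring)]
  apply Finset.sum_congr rfl
  intro k hk
  rw [Finset.mem_range] at hk
  have hkM : k ≤ M := by omega
  by_cases hka : k ≤ a
  · rw [if_pos hka]
    have hid : (M.choose a : ℝ) * (a.choose k : ℝ) = (M.choose k : ℝ) * (((M-k).choose (a-k) : ℕ) : ℝ) := by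
      exact_mod_cast congrArg (Nat.cast : ℕ → ℝ) (Nat.choose_mul (n := M) hka)
    have hdx : (x.descFactorial k : ℝ) = (k.factorial : ℝ) * (x.choose k : ℝ) := by
      rw [Nat.descFactorial_eq_factorial_mul_choose]; push_cast; ring
    have hdM : (M.descFactorial k : ℝ) = (k.factorial : ℝ) * (M.choose k : ℝ) := by
      rw [Nat.descFactorial_eq_factorial_mul_choose]; push_cast; ring
    have hMk : (M.choose k : ℝ) ≠ 0 := by
      exact_mod_cast (Nat.choose_pos hkM).ne'
    have hfac : (k.factorial : ℝ) ≠ 0 := by exact_mod_cast (Nat.factorial_pos k).ne'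
    rw [hdx, hdM]
    field_simp
    linear_combination (x.choose k : ℝ) * hid
  · rw [if_neg hka]
    have : a.choose k = 0 := Nat.choose_eq_zero_of_lt (by omega)
    rw [this]
    push_cast; ring

abbrev S := Polynomial (Polynomial ℝ)

lemma map_p (x m : ℕ) :
    Polynomial.map (C : ℝ →+* ℝ[X]) ((1 - X)^x * (1 + X)^m) 
      = ((1 - X)^x * (1 + X)^m : S) := by
  simp [Polynomial.map_mul, Polynomial.map_pow, Polynomial.map_sub, Polynomial.map_add,
    Polynomial.map_one, Polynomial.map_X]

lemma coeff_PP' (M a x : ℕ) :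
    (((1 - X) * (1 - C X))^x * ((1 + X) * (1 + C X))^(M - x) : S).coeff a
      = ((1 - X)^x * (1 + X)^(M - x) : ℝ[X]) * C (kap M a x) := by
  have h1 : (((1 - X) * (1 - C X))^x * ((1 + X) * (1 + C X))^(M - x) : S)
      = C ((1 - X)^x * (1 + X)^(M-x) : ℝ[X]) * ((1 - X)^x * (1 + X)^(M-x) : S) := by
    rw [map_mul, map_pow, map_pow, map_sub, map_add, map_one, mul_pow, mul_pow]
    ring
  rw [h1, coeff_C_mul, ← map_p, coeff_map]
  unfold kap
  ring

lemma coeff_PP (M a b x : ℕ) :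
    (((((1 - X) * (1 - C X))^x * ((1 + X) * (1 + C X))^(M - x) : S)).coeff a).coeff b
      = kap M a x * kap M b x := by
  rw [coeff_PP', coeff_mul_C]
  unfold kap
  ring

lemma coeff_PP_n (M a b x n : ℕ) :
    ((((((1 - X) * (1 - C X))^x * ((1 + X) * (1 + C X))^(M - x) * ((n:ℕ) : S)).coeff a).coeff b))
      = (n:ℝ) * (kap M a x * kap M b x) := by
  have hn : ((n:ℕ):S) = C (C ((n:ℕ):ℝ)) := by simp
  rw [hn, coeff_mul_C, coeff_PP', coeff_mul_C, coeff_mul_C]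
  unfold kap
  ring

lemma rhs1 (M a b : ℕ) (ha : a ≤ M) :
    ((((2:S)^M * (1 + X * C X)^M).coeff a).coeff b)
      = if a = b then (2:ℝ)^M * (M.choose a:ℝ) else 0 := by
  have h2 : (2:S) = C (C (2:ℝ)) := by rw [map_ofNat, map_ofNat]
  rw [show (1 + X * C X : S) = X * C X + 1 by ring, add_pow, Finset.mul_sum, finset_sum_coeff]
  have term : ∀ k, ((2:S)^M * ((X * C X)^k * 1^(M-k) * ((M.choose k : ℕ):S))).coeff a
      = ((2:ℝ[X])^M * X^k * ((M.choose k : ℕ):ℝ[X])) * (if a = k then 1 else 0) := by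
    intro k
    have hn : ((M.choose k:ℕ):S) = C (((M.choose k:ℕ)):ℝ[X]) := by simp
    have : (2:S)^M * ((X * C X)^k * 1^(M-k) * ((M.choose k : ℕ):S))
        = C ((2:ℝ[X])^M * X^k * ((M.choose k : ℕ):ℝ[X])) * X^k := by
      rw [one_pow, mul_pow, ← C_pow, hn, h2]
      simp only [C_mul, C_pow, show (2:ℝ[X]) = C (2:ℝ) by rw [map_ofNat]]
      ring
    rw [this, coeff_C_mul, coeff_X_pow]
  rw [Finset.sum_congr rfl (fun k _ => term k)]
  simp only [mul_ite, mul_one, mul_zero]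
  rw [Finset.sum_ite_eq (Finset.range (M+1)) a _]
  rw [if_pos (Finset.mem_range.2 (by omega))]
  have : ((2:ℝ[X])^M * X^a * ((M.choose a : ℕ):ℝ[X]))
      = C ((2:ℝ)^M * (M.choose a : ℝ)) * X^a := by
    rw [show ((M.choose a:ℕ):ℝ[X]) = C (((M.choose a:ℕ)):ℝ) by simp,
        show (2:ℝ[X]) = C (2:ℝ) by rw [map_ofNat]]
    simp only [C_mul, C_pow]
    ring
  rw [this, coeff_C_mul, coeff_X_pow]
  by_cases h : a = b
  · rw [if_pos h, if_pos h.symm, mul_one]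
  · rw [if_neg h, if_neg (fun hh => h hh.symm), mul_zero]

lemma ortho1 (M a b : ℕ) (ha : a ≤ M) (hb : b ≤ M) :
    ∑ x ∈ Finset.range (M+1), (M.choose x : ℝ) * (kap M a x * kap M b x)
      = if a = b then (2:ℝ)^M * (M.choose a : ℝ) else 0 := by
  have key : (∑ x ∈ Finset.range (M+1),
      ((1 - X) * (1 - C X) : S)^x * ((1 + X) * (1 + C X))^(M-x) * ((M.choose x : ℕ) : S))
      = 2^M * (1 + X * C X)^M := by
    rw [← add_pow, show ((1 - X) * (1 - C X) + (1 + X) * (1 + C X) : S)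
        = 2 * (1 + X * C X) by ring, mul_pow]
  have e := congrArg (fun f : S => (f.coeff a).coeff b) key
  simp only [finset_sum_coeff] at e
  rw [Finset.sum_congr rfl (fun x _ => coeff_PP_n M a b x _), rhs1 M a b ha] at e
  exact e

lemma coeff_PP_n' (M a b x n : ℕ) :
    ((((-((1 - X) * (1 - C X)) : S))^x * ((1 + X) * (1 + C X))^(M - x) * ((n:ℕ) : S)).coeff a).coeff b
      = (-1:ℝ)^x * ((n:ℝ) * (kap M a x * kap M b x)) := by
  have hC : (-1:S) = C (C (-1:ℝ)) := by simp
  have step1 : ((-((1 - X) * (1 - C X)) : S))^x * ((1 + X) * (1 + C X))^(M - x) * ((n:ℕ) : S)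
      = (-1:S)^x * (((1 - X) * (1 - C X))^x * ((1 + X) * (1 + C X))^(M - x) * ((n:ℕ) : S)) := by
    rw [neg_pow ((1 - X) * (1 - C X) : S) x]
    ring
  have step2 : (-1:S)^x = C (C ((-1:ℝ)^x)) := by rw [hC, ← C_pow, ← C_pow]
  rw [step1, step2, coeff_C_mul, coeff_C_mul, coeff_PP_n]

lemma rhs2 (M a b : ℕ) (ha : a ≤ M) (hb : b ≤ M) :
    ((((2:S)^M * (X + C X)^M).coeff a).coeff b)
      = if a + b = M then (2:ℝ)^M * (M.choose a:ℝ) else 0 := by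
  have h2 : (2:S) = C (C (2:ℝ)) := by rw [map_ofNat, map_ofNat]
  rw [add_pow, Finset.mul_sum, finset_sum_coeff]
  have term : ∀ k, ((2:S)^M * (X^k * (C X)^(M-k) * ((M.choose k : ℕ):S))).coeff a
      = ((2:ℝ[X])^M * X^(M-k) * ((M.choose k : ℕ):ℝ[X])) * (if a = k then 1 else 0) := by
    intro k
    have hn : ((M.choose k:ℕ):S) = C (((M.choose k:ℕ)):ℝ[X]) := by simp
    have : (2:S)^M * (X^k * (C X)^(M-k) * ((M.choose k : ℕ):S))
        = C ((2:ℝ[X])^M * X^(M-k) * ((M.choose k : ℕ):ℝ[X])) * X^k := by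
      rw [← C_pow, hn, h2]
      simp only [C_mul, C_pow, show (2:ℝ[X]) = C (2:ℝ) by rw [map_ofNat]]
      ring
    rw [this, coeff_C_mul, coeff_X_pow]
  rw [Finset.sum_congr rfl (fun k _ => term k)]
  simp only [mul_ite, mul_one, mul_zero]
  rw [Finset.sum_ite_eq (Finset.range (M+1)) a _]
  rw [if_pos (Finset.mem_range.2 (by omega))]
  have : ((2:ℝ[X])^M * X^(M-a) * ((M.choose a : ℕ):ℝ[X]))
      = C ((2:ℝ)^M * (M.choose a : ℝ)) * X^(M-a) := by
    rw [show ((M.choose a:ℕ):ℝ[X]) = C (((M.choose a:ℕ)):ℝ) by simp,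
        show (2:ℝ[X]) = C (2:ℝ) by rw [map_ofNat]]
    simp only [C_mul, C_pow]
    ring
  rw [this, coeff_C_mul, coeff_X_pow]
  by_cases h : a + b = M
  · rw [if_pos (show b = M - a by omega), if_pos h, mul_one]
  · rw [if_neg (show ¬ b = M - a by omega), if_neg h, mul_zero]

lemma ortho2 (M a b : ℕ) (ha : a ≤ M) (hb : b ≤ M) :
    ∑ x ∈ Finset.range (M+1), (-1:ℝ)^x * ((M.choose x : ℝ) * (kap M a x * kap M b x))
      = if a + b = M then (2:ℝ)^M * (M.choose a : ℝ) else 0 := by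
  have key : (∑ x ∈ Finset.range (M+1),
      (-((1 - X) * (1 - C X)) : S)^x * ((1 + X) * (1 + C X))^(M-x) * ((M.choose x : ℕ) : S))
      = 2^M * (X + C X)^M := by
    rw [← add_pow, show (-((1 - X) * (1 - C X)) + (1 + X) * (1 + C X) : S)
        = 2 * (X + C X) by ring, mul_pow]
  have e := congrArg (fun f : S => (f.coeff a).coeff b) key
  simp only [finset_sum_coeff] at e
  rw [Finset.sum_congr rfl (fun x _ => coeff_PP_n' M a b x _), rhs2 M a b ha hb] at e
  exact e

lemma sum_even (f : ℕ → ℝ) (N : ℕ) :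
    (∑ y ∈ Finset.range (2*N+1), f y) + (∑ y ∈ Finset.range (2*N+1), (-1:ℝ)^y * f y)
      = 2 * ∑ x ∈ Finset.range (N+1), f (2*x) := by
  induction N with
  | zero => simp; ring
  | succ N ih =>
    have hr : 2*(N+1)+1 = (2*N+1)+1+1 := by ring
    rw [hr, Finset.sum_range_succ, Finset.sum_range_succ,
      Finset.sum_range_succ (fun y => (-1:ℝ)^y * f y), Finset.sum_range_succ (fun y => (-1:ℝ)^y * f y),
      Finset.sum_range_succ (fun x => f (2*x))]
    have ho : (-1:ℝ)^(2*N+1) = -1 := Odd.neg_one_pow ⟨N, by ring⟩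
    have he : (-1:ℝ)^(2*N+1+1) = 1 := Even.neg_one_pow ⟨N+1, by ring⟩
    have harg : 2*N+1+1 = 2*(N+1) := by ring
    rw [ho, he, harg]
    linarith [ih]

theorem stmt5 (N n n' : ℕ) (hN : 1 ≤ N) (hn : n ≤ N) (hn' : n' ≤ N) :
    ∑ x ∈ Finset.range (N + 1),
        ((2 : ℝ) ^ (2 * N - 1))⁻¹ * (Nat.choose (2 * N) n : ℝ) * (Nat.choose (2 * N) (2 * x) : ℝ) *
          kraw n (2 * (x : ℝ)) (1/2) (2 * N) * kraw n' (2 * (x : ℝ)) (1/2) (2 * N)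
      = if n = N then (if n = n' then 2 else 0) else (if n = n' then 1 else 0) := by
  have hn2 : n ≤ 2*N := by omega
  have hn'2 : n' ≤ 2*N := by omega
  have hcn : (((2*N).choose n : ℕ):ℝ) ≠ 0 := by exact_mod_cast (Nat.choose_pos hn2).ne'
  have hcn' : (((2*N).choose n' : ℕ):ℝ) ≠ 0 := by exact_mod_cast (Nat.choose_pos hn'2).ne'
  have hw : ((2:ℝ)^(2*N-1)) ≠ 0 := by positivity
  have h2N : (2:ℝ)^(2*N) = 2 * (2:ℝ)^(2*N-1) := by
    rw [← pow_succ']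
    congr 1
    omega
  have hterm : ∀ x ∈ Finset.range (N+1),
      ((2 : ℝ) ^ (2 * N - 1))⁻¹ * (Nat.choose (2 * N) n : ℝ) * (Nat.choose (2 * N) (2 * x) : ℝ) *
          kraw n (2 * (x : ℝ)) (1/2) (2 * N) * kraw n' (2 * (x : ℝ)) (1/2) (2 * N)
      = ((2:ℝ)^(2*N-1))⁻¹ / (Nat.choose (2*N) n' : ℝ) *
          ((Nat.choose (2*N) (2*x):ℝ) * (kap (2*N) n (2*x) * kap (2*N) n' (2*x))) := by
    intro x hx
    rw [Finset.mem_range] at hx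
    have hx2 : 2*x ≤ 2*N := by omega
    have e1 : kraw n (2*(x:ℝ)) (1/2) (2*N) = kap (2*N) n (2*x) / (Nat.choose (2*N) n : ℝ) := by
      rw [eq_div_iff hcn, show (2*(x:ℝ)) = (((2*x:ℕ)):ℝ) by push_cast; ring, mul_comm]
      exact choose_mul_kraw_eq_kap (2*N) n (2*x) hn2 hx2
    have e2 : kraw n' (2*(x:ℝ)) (1/2) (2*N) = kap (2*N) n' (2*x) / (Nat.choose (2*N) n' : ℝ) := by
      rw [eq_div_iff hcn', show (2*(x:ℝ)) = (((2*x:ℕ)):ℝ) by push_cast; ring, mul_comm]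
      exact choose_mul_kraw_eq_kap (2*N) n' (2*x) hn'2 hx2
    rw [e1, e2]
    field_simp
  rw [Finset.sum_congr rfl hterm, ← Finset.mul_sum]
  have hsplit := sum_even (fun y => (Nat.choose (2*N) y : ℝ) * (kap (2*N) n y * kap (2*N) n' y)) N
  rw [ortho1 (2*N) n n' hn2 hn'2, ortho2 (2*N) n n' hn2 hn'2] at hsplit
  set E := ∑ x ∈ Finset.range (N+1),
      ((Nat.choose (2*N) (2*x):ℝ) * (kap (2*N) n (2*x) * kap (2*N) n' (2*x))) with hE
  by_cases h1 : n = n'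
  · subst h1
    by_cases h2 : n = N
    · rw [if_pos rfl, if_pos h2] at *
      rw [if_pos (show n + n = 2*N by omega)] at hsplit
      have hEv : E = (2:ℝ)^(2*N) * ((2*N).choose n : ℝ) := by
        linear_combination (-(1/2 : ℝ)) * hsplit
      rw [hEv, h2N]
      field_simp
    · rw [if_pos rfl, if_neg h2]
      rw [if_pos rfl, if_neg (show ¬ (n + n = 2*N) by omega), h2N] at hsplit
      have hEv : E = (2:ℝ)^(2*N-1) * ((2*N).choose n : ℝ) := by
        linear_combination (-(1/2 : ℝ)) * hsplit
      rw [hEv]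
      field_simp
      simp
  · rw [if_neg (show ¬ (n + n' = 2*N) by omega), if_neg h1] at hsplit
    rw [if_neg h1, if_neg h1]
    have hEv : E = 0 := by linarith
    rw [hEv, mul_zero]
    split <;> rfl
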